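/- Let π, σ ∈ S_n with L := LCS(π,σ) ≥ 4 and let (c₁,...,c_L) be any longest common subsequence of π and σ, with W_{i,j} defined as above for 1 ≤ i < j ≤ L. Then Σ_{1 ≤ i < j ≤ L} 1/W_{i,j} ≥ L²·ln(L)/(32n). -/

import Mathlib

open scoped Classical
open Finset

noncomputable section

def oneLine {n : ℕ} (π : Equiv.Perm (Fin n)) : List (Fin n) :=
  (List.finRange n).map π

def lcs {n : ℕ} (π σ : Equiv.Perm (Fin n)) : ℕ :=
  sSup {k | ∃ l : List (Fin n), l.Sublist (oneLine π) ∧ l.Sublist (oneLine σ) ∧ l.length = k}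

/-- The interval `I^π_{i,j} = {x : c_i ≤_π x ≤_π c_j}`, where `a ≤_π b` means
`π⁻¹ a ≤ π⁻¹ b`. -/
def interval {n L : ℕ} (π : Equiv.Perm (Fin n)) (c : Fin L → Fin n) (i j : Fin L) :
    Finset (Fin n) :=
  Finset.univ.filter (fun x => π⁻¹ (c i) ≤ π⁻¹ x ∧ π⁻¹ x ≤ π⁻¹ (c j))

lemma interval_card {n L : ℕ} (π : Equiv.Perm (Fin n)) (c : Fin L → Fin n) (i j : Fin L)
    (h : π⁻¹ (c i) ≤ π⁻¹ (c j)) :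
    (interval π c i j).card = ((π⁻¹ (c j) : Fin n) : ℕ) - ((π⁻¹ (c i) : Fin n) : ℕ) + 1 := by
  have he : interval π c i j = (Finset.Icc (π⁻¹ (c i)) (π⁻¹ (c j))).map
      (π : Equiv.Perm (Fin n)).toEmbedding := by
    ext x
    simp only [interval, Finset.mem_filter, Finset.mem_univ, true_and, Finset.mem_map,
      Finset.mem_Icc, Equiv.coe_toEmbedding]
    constructor
    · intro hx
      exact ⟨π⁻¹ x, ⟨hx.1, hx.2⟩, by simp⟩
    · rintro ⟨y, hy, rfl⟩
      simpa using hy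
  rw [he, Finset.card_map, Fin.card_Icc]
  have hv : ((π⁻¹ (c i) : Fin n) : ℕ) ≤ ((π⁻¹ (c j) : Fin n) : ℕ) := h
  omega

lemma sq_card_le_sum_mul_sum_inv {ι : Type*} (s : Finset ι) (f : ι → ℝ)
    (hf : ∀ i ∈ s, 0 < f i) :
    (s.card : ℝ) ^ 2 ≤ (∑ i ∈ s, f i) * ∑ i ∈ s, 1 / f i := by
  have h := Finset.sum_mul_sq_le_sq_mul_sq s (fun i => Real.sqrt (f i))
    (fun i => 1 / Real.sqrt (f i))
  have h1 : ∑ i ∈ s, Real.sqrt (f i) * (1 / Real.sqrt (f i)) = (s.card : ℝ) := by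
    rw [Finset.sum_congr rfl (fun i hi => ?_), Finset.sum_const, nsmul_eq_mul, mul_one]
    have : Real.sqrt (f i) ≠ 0 := by
      have := hf i hi
      positivity
    field_simp
  have h2 : ∀ i ∈ s, Real.sqrt (f i) ^ 2 = f i := fun i hi =>
    Real.sq_sqrt (hf i hi).le
  have h3 : ∀ i ∈ s, (1 / Real.sqrt (f i)) ^ 2 = 1 / f i := by
    intro i hi
    rw [div_pow, one_pow, Real.sq_sqrt (hf i hi).le]
  calc (s.card : ℝ) ^ 2 = (∑ i ∈ s, Real.sqrt (f i) * (1 / Real.sqrt (f i))) ^ 2 := by rw [h1]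
    _ ≤ (∑ i ∈ s, Real.sqrt (f i) ^ 2) * ∑ i ∈ s, (1 / Real.sqrt (f i)) ^ 2 := h
    _ = (∑ i ∈ s, f i) * ∑ i ∈ s, 1 / f i := by
        rw [Finset.sum_congr rfl h2, Finset.sum_congr rfl h3]

lemma log_le_harmonic (m : ℕ) :
    Real.log (m + 1) ≤ ∑ d ∈ Finset.Icc 1 m, (1 : ℝ) / d := by
  induction m with
  | zero => simp
  | succ m ih =>
    rw [Finset.sum_Icc_succ_top (by omega : 1 ≤ m + 1)]
    have hpos : (0:ℝ) < (m:ℝ) + 1 := by positivity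
    have h1 : Real.log ((m:ℝ) + 1 + 1) - Real.log ((m:ℝ) + 1) ≤ 1 / ((m:ℝ) + 1) := by
      have hq : (0:ℝ) < ((m:ℝ) + 2) / ((m:ℝ) + 1) := by positivity
      have hlog := Real.log_le_sub_one_of_pos hq
      rw [Real.log_div (by positivity) (by positivity)] at hlog
      have h2 : ((m:ℝ) + 2) / ((m:ℝ) + 1) - 1 = 1 / ((m:ℝ) + 1) := by
        field_simp
        norm_num
      rw [h2] at hlog
      have : (m:ℝ) + 1 + 1 = (m:ℝ) + 2 := by ring
      rw [this]
      linarith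
    push_cast
    push_cast at ih
    linarith

lemma sum_shift_sub {M d : ℕ} (Q : ℕ → ℝ) :
    ∑ i ∈ Finset.range M, (Q (i + d) - Q i) =
      ∑ i ∈ Finset.Ico M (M + d), Q i - ∑ i ∈ Finset.range d, Q i := by
  rw [Finset.sum_sub_distrib]
  have e1 : ∑ i ∈ Finset.range M, Q (i + d) = ∑ i ∈ Finset.Ico d (M + d), Q i := by
    rw [Finset.sum_Ico_eq_sum_range]
    have hMd : M + d - d = M := by omega
    rw [hMd]
    exact Finset.sum_congr rfl fun i _ => by rw [add_comm]
  have e2 : ∑ i ∈ Finset.Ico 0 d, Q i + ∑ i ∈ Finset.Ico d (M + d), Q i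
      = ∑ i ∈ Finset.Ico 0 (M + d), Q i :=
    Finset.sum_Ico_consecutive Q (by omega) (by omega)
  have e3 : ∑ i ∈ Finset.Ico 0 M, Q i + ∑ i ∈ Finset.Ico M (M + d), Q i
      = ∑ i ∈ Finset.Ico 0 (M + d), Q i :=
    Finset.sum_Ico_consecutive Q (by omega) (by omega)
  rw [e1]
  simp only [Finset.range_eq_Ico] at *
  linarith

set_option maxHeartbeats 1000000 in
theorem sum_inv_W_lower_bound {n L : ℕ} (π σ : Equiv.Perm (Fin n))
    (hL : L = lcs π σ) (hL4 : 4 ≤ L) (c : Fin L → Fin n)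
    (hcπ : ∀ i j : Fin L, i < j → π⁻¹ (c i) < π⁻¹ (c j))
    (hcσ : ∀ i j : Fin L, i < j → σ⁻¹ (c i) < σ⁻¹ (c j)) :
    (L : ℝ) ^ 2 * Real.log L / (32 * n) ≤
      ∑ i : Fin L, ∑ j : Fin L,
        if i < j then
          (1 : ℝ) / ((interval π c i j ∪ interval σ c i j).card : ℝ)
        else 0 := by
  classical
  -- notation
  set t : Fin L → Fin L → ℝ := fun i j =>
    (1 : ℝ) / ((interval π c i j ∪ interval σ c i j).card : ℝ) with ht
  have ht_nonneg : ∀ i j : Fin L, 0 ≤ t i j := fun i j => by positivity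
  -- L ≤ n
  have hLn : L ≤ n := by
    have hinj : Function.Injective (fun i : Fin L => π⁻¹ (c i)) := by
      intro a b hab
      rcases lt_trichotomy a b with h | h | h
      · exact absurd hab (ne_of_lt (hcπ a b h))
      · exact h
      · exact absurd hab.symm (ne_of_lt (hcπ b a h))
    simpa using Fintype.card_le_of_injective _ hinj
  have hn0 : 0 < n := by omega
  set m := L / 2 with hm
  have hm1 : 1 ≤ m := by omega
  -- position functions
  set Qπ : ℕ → ℝ := fun k => if h : k < L then ((π⁻¹ (c ⟨k, h⟩) : Fin n) : ℝ) else 0 with hQπ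
  set Qσ : ℕ → ℝ := fun k => if h : k < L then ((σ⁻¹ (c ⟨k, h⟩) : Fin n) : ℝ) else 0 with hQσ
  set x : ℕ → ℕ → ℝ := fun d i => (Qπ (i + d) - Qπ i + 1) + (Qσ (i + d) - Qσ i + 1) with hx
  have hQπ_lt : ∀ k, Qπ k ≤ (n : ℝ) := by
    intro k
    simp only [hQπ]
    split
    · exact_mod_cast (Fin.is_lt _).le
    · positivity
  have hQσ_lt : ∀ k, Qσ k ≤ (n : ℝ) := by
    intro k
    simp only [hQσ]
    split
    · exact_mod_cast (Fin.is_lt _).le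
    · positivity
  have hQπ_nonneg : ∀ k, 0 ≤ Qπ k := by
    intro k; simp only [hQπ]; split <;> positivity
  have hQσ_nonneg : ∀ k, 0 ≤ Qσ k := by
    intro k; simp only [hQσ]; split <;> positivity
  have hQπ_mono : ∀ k l : ℕ, k < l → (hl : l < L) → Qπ k ≤ Qπ l := by
    intro k l hkl hl
    have hk : k < L := by omega
    simp only [hQπ, dif_pos hk, dif_pos hl]
    have := hcπ ⟨k, hk⟩ ⟨l, hl⟩ (by exact Fin.mk_lt_mk.mpr hkl)
    exact_mod_cast (Fin.lt_iff_val_lt_val.mp this).le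
  have hQσ_mono : ∀ k l : ℕ, k < l → (hl : l < L) → Qσ k ≤ Qσ l := by
    intro k l hkl hl
    have hk : k < L := by omega
    simp only [hQσ, dif_pos hk, dif_pos hl]
    have := hcσ ⟨k, hk⟩ ⟨l, hl⟩ (by exact Fin.mk_lt_mk.mpr hkl)
    exact_mod_cast (Fin.lt_iff_val_lt_val.mp this).le
  -- pointwise key bound
  have hkey : ∀ (d i : ℕ), 1 ≤ d → (hid : i + d < L) →
      1 / x d i ≤ t ⟨i, by omega⟩ ⟨i + d, hid⟩ := by
    intro d i hd hid
    have hi : i < L := by omega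
    set a : Fin L := ⟨i, hi⟩
    set b : Fin L := ⟨i + d, hid⟩
    have hab : a < b := Fin.mk_lt_mk.mpr (by omega)
    have hπle := (hcπ a b hab).le
    have hσle := (hcσ a b hab).le
    have hπv : ((π⁻¹ (c a) : Fin n) : ℕ) ≤ ((π⁻¹ (c b) : Fin n) : ℕ) := hπle
    have hσv : ((σ⁻¹ (c a) : Fin n) : ℕ) ≤ ((σ⁻¹ (c b) : Fin n) : ℕ) := hσle
    have h1 := interval_card π c a b hπle
    have h2 := interval_card σ c a b hσle
    have hx_eq : x d i = (((((π⁻¹ (c b) : Fin n) : ℕ) - ((π⁻¹ (c a) : Fin n) : ℕ) + 1)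
        + ((((σ⁻¹ (c b) : Fin n) : ℕ) - ((σ⁻¹ (c a) : Fin n) : ℕ)) + 1) : ℕ) : ℝ) := by
      simp only [hx, hQπ, hQσ, dif_pos hi, dif_pos hid]
      push_cast [Nat.cast_sub hπv, Nat.cast_sub hσv]
      ring
    have hcard_le : ((interval π c a b ∪ interval σ c a b).card : ℝ) ≤ x d i := by
      rw [hx_eq]
      have hle := Finset.card_union_le (interval π c a b) (interval σ c a b)
      rw [h1, h2] at hle
      exact_mod_cast hle
    have hcard_pos : (0:ℝ) < ((interval π c a b ∪ interval σ c a b).card : ℝ) := by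
      have hmem : c a ∈ interval π c a b := by
        simpa [interval] using hπle
      have : 0 < (interval π c a b ∪ interval σ c a b).card :=
        Finset.card_pos.mpr ⟨c a, Finset.mem_union_left _ hmem⟩
      exact_mod_cast this
    exact one_div_le_one_div_of_le hcard_pos hcard_le
  have hx_pos : ∀ (d i : ℕ), 1 ≤ d → i + d < L → 0 < x d i := by
    intro d i hd hid
    have h1 : Qπ i ≤ Qπ (i + d) := hQπ_mono i (i + d) (by omega) hid
    have h2 : Qσ i ≤ Qσ (i + d) := hQσ_mono i (i + d) (by omega) hid
    simp only [hx]
    linarith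
  -- rewrite the goal as a sum over pairs
  have hA : (∑ i : Fin L, ∑ j : Fin L, if i < j then t i j else 0)
      = ∑ p ∈ Finset.univ.filter (fun p : Fin L × Fin L => p.1 < p.2), t p.1 p.2 := by
    rw [Finset.sum_filter, ← Finset.univ_product_univ, Finset.sum_product]
  set A : Finset (Fin L × Fin L) := Finset.univ.filter (fun p : Fin L × Fin L => p.1 < p.2)
    with hAdef
  set B : Finset (Fin L × Fin L) :=
    Finset.univ.filter (fun p : Fin L × Fin L => p.1 < p.2 ∧ (p.2 : ℕ) - (p.1 : ℕ) ≤ m)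
    with hBdef
  have hBA : B ⊆ A := by
    intro p hp
    simp only [hAdef, hBdef, Finset.mem_filter, Finset.mem_univ, true_and] at *
    exact hp.1
  have hB_le_A : ∑ p ∈ B, t p.1 p.2 ≤ ∑ p ∈ A, t p.1 p.2 :=
    Finset.sum_le_sum_of_subset_of_nonneg hBA (fun p _ _ => ht_nonneg _ _)
  -- the diagonal-strip index set
  set D : Finset (ℕ × ℕ) :=
    ((Finset.Icc 1 m) ×ˢ Finset.range L).filter (fun q => q.2 + q.1 < L) with hDdef
  have hDmem : ∀ q : ℕ × ℕ, q ∈ D ↔ 1 ≤ q.1 ∧ q.1 ≤ m ∧ q.2 < L ∧ q.2 + q.1 < L := by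
    intro q
    simp only [hDdef, Finset.mem_filter, Finset.mem_product, Finset.mem_Icc, Finset.mem_range]
    tauto
  set g : ℕ × ℕ → ℝ := fun q =>
    if h : q.2 + q.1 < L ∧ 1 ≤ q.1 then t ⟨q.2, by omega⟩ ⟨q.2 + q.1, h.1⟩ else 0 with hg
  have hDB : ∑ q ∈ D, g q = ∑ p ∈ B, t p.1 p.2 := by
    apply Finset.sum_bij
      (i := fun q hq => ((⟨q.2, by have := (hDmem q).mp hq; omega⟩ : Fin L),
        (⟨q.2 + q.1, by have := (hDmem q).mp hq; omega⟩ : Fin L)))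
    · intro q hq
      have hq' := (hDmem q).mp hq
      simp only [hBdef, Finset.mem_filter, Finset.mem_univ, true_and]
      constructor
      · exact Fin.mk_lt_mk.mpr (by omega)
      · show q.2 + q.1 - q.2 ≤ m
        omega
    · intro q1 hq1 q2 hq2 heq
      simp only [Prod.mk.injEq, Fin.mk.injEq] at heq
      obtain ⟨e1, e2⟩ := heq
      have : q1.1 = q2.1 := by omega
      exact Prod.ext this e1
    · intro p hp
      simp only [hBdef, Finset.mem_filter, Finset.mem_univ, true_and] at hp
      have hlt : (p.1 : ℕ) < (p.2 : ℕ) := hp.1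
      refine ⟨((p.2 : ℕ) - (p.1 : ℕ), (p.1 : ℕ)), ?_, ?_⟩
      · rw [hDmem]
        refine ⟨by omega, hp.2, p.1.is_lt, by omega⟩
      · refine Prod.ext (Fin.ext ?_) (Fin.ext ?_) <;> simp <;> omega
    · intro q hq
      have hq' := (hDmem q).mp hq
      simp only [hg]
      rw [dif_pos ⟨hq'.2.2.2, hq'.1⟩]
  -- f ≤ g pointwise on D
  set f : ℕ × ℕ → ℝ := fun q => 1 / x q.1 q.2 with hf
  have hfg : ∑ q ∈ D, f q ≤ ∑ q ∈ D, g q := by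
    apply Finset.sum_le_sum
    intro q hq
    have hq' := (hDmem q).mp hq
    simp only [hf, hg]
    rw [dif_pos ⟨hq'.2.2.2, hq'.1⟩]
    exact hkey q.1 q.2 hq'.1 hq'.2.2.2
  -- unfold D-sum to iterated sums
  have hD_eq : ∑ q ∈ D, f q
      = ∑ d ∈ Finset.Icc 1 m, ∑ i ∈ Finset.range (L - d), f (d, i) := by
    rw [hDdef, Finset.sum_filter, Finset.sum_product]
    refine Finset.sum_congr rfl fun d hd => ?_
    rw [← Finset.sum_filter]
    have hfd : (Finset.range L).filter (fun i => i + d < L) = Finset.range (L - d) := by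
      ext i
      simp only [Finset.mem_filter, Finset.mem_range]
      omega
    rw [hfd]
  -- the per-gap bound
  have hgap : ∀ d ∈ Finset.Icc 1 m,
      (L : ℝ) ^ 2 / (16 * n * d) ≤ ∑ i ∈ Finset.range (L - d), f (d, i) := by
    intro d hd
    simp only [Finset.mem_Icc] at hd
    set M := L - d with hMdef
    have hdL : d < L := by omega
    have hM2 : (L : ℝ) ≤ 2 * (M : ℝ) := by
      have : L ≤ 2 * M := by omega
      exact_mod_cast this
    have hMpos : 0 < M := by omega
    have hxpos' : ∀ i ∈ Finset.range M, 0 < x d i := by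
      intro i hi
      simp only [Finset.mem_range] at hi
      exact hx_pos d i hd.1 (by omega)
    -- sum of x over the strip
    have hsum_x : ∑ i ∈ Finset.range M, x d i ≤ 4 * d * n := by
      have hsplit : ∑ i ∈ Finset.range M, x d i
          = (∑ i ∈ Finset.range M, (Qπ (i + d) - Qπ i))
            + (∑ i ∈ Finset.range M, (Qσ (i + d) - Qσ i)) + 2 * M := by
        simp only [hx]
        rw [← Finset.sum_add_distrib]
        rw [Finset.sum_add_distrib (f := fun i => Qπ (i + d) - Qπ i + 1)
          (g := fun i => Qσ (i + d) - Qσ i + 1)]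
        · simp [Finset.sum_add_distrib, Finset.sum_sub_distrib]
          ring
      have hπ_bound : ∑ i ∈ Finset.range M, (Qπ (i + d) - Qπ i) ≤ d * n := by
        rw [sum_shift_sub]
        have h1 : ∑ i ∈ Finset.Ico M (M + d), Qπ i ≤ d * n := by
          calc ∑ i ∈ Finset.Ico M (M + d), Qπ i ≤ ∑ _i ∈ Finset.Ico M (M + d), (n : ℝ) :=
              Finset.sum_le_sum fun i _ => hQπ_lt i
            _ = d * n := by
                rw [Finset.sum_const, Nat.card_Ico, Nat.add_sub_cancel_left, nsmul_eq_mul]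
        have h2 : (0:ℝ) ≤ ∑ i ∈ Finset.range d, Qπ i :=
          Finset.sum_nonneg fun i _ => hQπ_nonneg i
        linarith
      have hσ_bound : ∑ i ∈ Finset.range M, (Qσ (i + d) - Qσ i) ≤ d * n := by
        rw [sum_shift_sub]
        have h1 : ∑ i ∈ Finset.Ico M (M + d), Qσ i ≤ d * n := by
          calc ∑ i ∈ Finset.Ico M (M + d), Qσ i ≤ ∑ _i ∈ Finset.Ico M (M + d), (n : ℝ) :=
              Finset.sum_le_sum fun i _ => hQσ_lt i
            _ = d * n := by
                rw [Finset.sum_const, Nat.card_Ico, Nat.add_sub_cancel_left, nsmul_eq_mul]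
        have h2 : (0:ℝ) ≤ ∑ i ∈ Finset.range d, Qσ i :=
          Finset.sum_nonneg fun i _ => hQσ_nonneg i
        linarith
      have hM_le : (M : ℝ) ≤ d * n := by
        have : M ≤ d * n := by
          calc M ≤ L := by omega
            _ ≤ n := hLn
            _ ≤ d * n := Nat.le_mul_of_pos_left n hd.1
        exact_mod_cast this
      rw [hsplit]
      linarith
    -- Cauchy–Schwarz
    have hCS := sq_card_le_sum_mul_sum_inv (Finset.range M) (x d) hxpos'
    rw [Finset.card_range] at hCS
    have hsum_pos : 0 < ∑ i ∈ Finset.range M, x d i := by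
      apply Finset.sum_pos hxpos'
      exact ⟨0, Finset.mem_range.mpr hMpos⟩
    have hdn_pos : (0:ℝ) < 4 * d * n := by
      have : (0:ℝ) < (d:ℝ) := by exact_mod_cast hd.1
      positivity
    have hinv_nonneg : (0:ℝ) ≤ ∑ i ∈ Finset.range M, 1 / x d i :=
      Finset.sum_nonneg fun i hi => le_of_lt (one_div_pos.mpr (hxpos' i hi))
    have hstep1 : (M : ℝ) ^ 2 / (4 * d * n) ≤ ∑ i ∈ Finset.range M, 1 / x d i := by
      rw [div_le_iff₀ hdn_pos]
      calc (M : ℝ) ^ 2 ≤ (∑ i ∈ Finset.range M, x d i) * ∑ i ∈ Finset.range M, 1 / x d i := hCS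
        _ ≤ (∑ i ∈ Finset.range M, 1 / x d i) * (4 * d * n) := by
            rw [mul_comm]
            exact mul_le_mul_of_nonneg_left hsum_x hinv_nonneg
    have hstep2 : (L : ℝ) ^ 2 / (16 * n * d) ≤ (M : ℝ) ^ 2 / (4 * d * n) := by
      have hL0' : (0:ℝ) ≤ (L:ℝ) := Nat.cast_nonneg L
      have hsq : (L:ℝ) ^ 2 ≤ 4 * (M:ℝ) ^ 2 := by nlinarith [hM2, hL0']
      have hd0 : (0:ℝ) < (d:ℝ) := by exact_mod_cast hd.1
      have hn0' : (0:ℝ) < (n:ℝ) := by exact_mod_cast hn0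
      have h16 : (0:ℝ) < 16 * (n:ℝ) * (d:ℝ) :=
        mul_pos (mul_pos (by norm_num) hn0') hd0
      rw [div_le_div_iff₀ h16 hdn_pos]
      nlinarith [mul_le_mul_of_nonneg_right hsq (le_of_lt hdn_pos)]
    calc (L : ℝ) ^ 2 / (16 * n * d) ≤ (M : ℝ) ^ 2 / (4 * d * n) := hstep2
      _ ≤ ∑ i ∈ Finset.range M, 1 / x d i := hstep1
      _ = ∑ i ∈ Finset.range M, f (d, i) := rfl
  -- harmonic sum
  have hharm : (L : ℝ) ^ 2 * Real.log L / (32 * n)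
      ≤ ∑ d ∈ Finset.Icc 1 m, (L : ℝ) ^ 2 / (16 * n * d) := by
    have hlogL : Real.log L ≤ 2 * Real.log (m + 1) := by
      have hLm : (L : ℝ) ≤ ((m : ℝ) + 1) ^ 2 := by
        have h2m : L ≤ 2 * m + 1 := by omega
        have : L ≤ (m + 1) * (m + 1) := by nlinarith [h2m]
        calc (L : ℝ) ≤ ((m + 1) * (m + 1) : ℕ) := by exact_mod_cast this
          _ = ((m : ℝ) + 1) ^ 2 := by push_cast; ring
      calc Real.log L ≤ Real.log (((m : ℝ) + 1) ^ 2) :=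
          Real.log_le_log (by positivity) hLm
        _ = 2 * Real.log ((m : ℝ) + 1) := by
            rw [Real.log_pow]; push_cast; ring
    have hsum_harm : Real.log ((m : ℝ) + 1) ≤ ∑ d ∈ Finset.Icc 1 m, (1 : ℝ) / d := by
      have := log_le_harmonic m
      push_cast at this
      exact this
    have hfactor : ∑ d ∈ Finset.Icc 1 m, (L : ℝ) ^ 2 / (16 * n * d)
        = (L : ℝ) ^ 2 / (16 * n) * ∑ d ∈ Finset.Icc 1 m, (1 : ℝ) / d := by
      rw [Finset.mul_sum]
      refine Finset.sum_congr rfl fun d hd => ?_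
      field_simp
    rw [hfactor]
    have hc : (0:ℝ) ≤ (L : ℝ) ^ 2 / (16 * n) := by positivity
    calc (L : ℝ) ^ 2 * Real.log L / (32 * n)
        = (L : ℝ) ^ 2 / (16 * n) * (Real.log L / 2) := by ring
      _ ≤ (L : ℝ) ^ 2 / (16 * n) * Real.log ((m : ℝ) + 1) := by
          apply mul_le_mul_of_nonneg_left _ hc
          linarith
      _ ≤ (L : ℝ) ^ 2 / (16 * n) * ∑ d ∈ Finset.Icc 1 m, (1 : ℝ) / d :=
          mul_le_mul_of_nonneg_left hsum_harm hc
  -- put everything together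
  calc (L : ℝ) ^ 2 * Real.log L / (32 * n)
      ≤ ∑ d ∈ Finset.Icc 1 m, (L : ℝ) ^ 2 / (16 * n * d) := hharm
    _ ≤ ∑ d ∈ Finset.Icc 1 m, ∑ i ∈ Finset.range (L - d), f (d, i) :=
        Finset.sum_le_sum hgap
    _ = ∑ q ∈ D, f q := hD_eq.symm
    _ ≤ ∑ q ∈ D, g q := hfg
    _ = ∑ p ∈ B, t p.1 p.2 := hDB
    _ ≤ ∑ p ∈ A, t p.1 p.2 := hB_le_A
    _ = ∑ i : Fin L, ∑ j : Fin L, if i < j then t i j else 0 := hA.symm
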